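/- Let G be a divisor on a curve X and let η be a nonzero rational differential with divisor (η) = G - D' + E, where D', E >= 0 and E and D' have disjoint support. If G = A + B + Z with Z >= 0 and Z disjoint from D', then deg D' >= (l(A) - l(A - D')) + (l(B) - l(B - D')). -/

import Mathlib

noncomputable section

/-- Degree of a divisor, where divisors on the curve are modeled as finitely
supported integer valued functions on the set of rational points. -/
def degr {Point : Type*} (D : Point →₀ ℤ) : ℤ := D.sum fun _ n => n

/-- An abstract model of a smooth projective absolutely irreducible curve over a field,
recording the data used in the paper: the dimension `l D` of the Riemann-Roch space
`L(D)`, the genus `g`, a canonical divisor `K`, and linear equivalence `lin`,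
together with their basic properties (Riemann-Roch, monotonicity, semigroup
properties of nongaps, etc.). -/
structure Curve (Point : Type*) where
  /-- `l D = dim L(D)` -/
  l : (Point →₀ ℤ) → ℕ
  /-- the genus -/
  g : ℕ
  /-- a canonical divisor -/
  K : Point →₀ ℤ
  /-- linear equivalence of divisors -/
  lin : (Point →₀ ℤ) → (Point →₀ ℤ) → Prop
  lin_refl : ∀ A, lin A A
  lin_symm : ∀ {A B}, lin A B → lin B A
  lin_trans : ∀ {A B C}, lin A B → lin B C → lin A C
  lin_add : ∀ {A B} (E : Point →₀ ℤ), lin A B → lin (A + E) (B + E)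
  deg_lin : ∀ {A B}, lin A B → degr A = degr B
  l_lin : ∀ {A B}, lin A B → l A = l B
  l_zero : l 0 = 1
  l_neg : ∀ {D}, degr D < 0 → l D = 0
  l_mono : ∀ (D : Point →₀ ℤ) (P : Point), l D ≤ l (D + Finsupp.single P 1)
  l_step : ∀ (D : Point →₀ ℤ) (P : Point), l (D + Finsupp.single P 1) ≤ l D + 1
  /-- Riemann-Roch -/
  rr : ∀ D : Point →₀ ℤ, (l D : ℤ) - l (K - D) = degr D + 1 - g
  lin_of_deg_zero : ∀ {D}, l D ≠ 0 → degr D = 0 → lin D 0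
  /-- the semigroup property of `Γ_P` -/
  gamma_add : ∀ (P : Point) {A B}, l A ≠ l (A - Finsupp.single P 1) →
      l B ≠ l (B - Finsupp.single P 1) → l (A + B) ≠ l (A + B - Finsupp.single P 1)
  eff_add : ∀ {A B}, l A ≠ 0 → l B ≠ 0 → l (A + B) ≠ 0
  point_nongap : ∀ {P Q : Point}, P ≠ Q →
      l (Finsupp.single P 1) ≠ l (Finsupp.single P 1 - Finsupp.single Q 1)

variable {Point : Type*}

/-- `Γ_P` : divisor (classes) with no base point at `P`, i.e. `L(A) ≠ L(A-P)`. -/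
def GammaP (X : Curve Point) (P : Point) : Set (Point →₀ ℤ) :=
  {A | X.l A ≠ X.l (A - Finsupp.single P 1)}

/-- `Γ_S = ∩_{P ∈ S} Γ_P`, with the convention `Γ_∅ = Γ = {A : L(A) ≠ 0}`. -/
def GammaS (X : Curve Point) (S : Finset Point) : Set (Point →₀ ℤ) :=
  {A | (S = ∅ → X.l A ≠ 0) ∧ ∀ P ∈ S, A ∈ GammaP X P}

/-- `Γ(C; S, S') = {A : A ∈ Γ_S and A - C ∈ Γ_{S'}}`. -/
def GammaSet (X : Curve Point) (C : Point →₀ ℤ) (S S' : Finset Point) :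
    Set (Point →₀ ℤ) :=
  {A | A ∈ GammaS X S ∧ A - C ∈ GammaS X S'}

/-- `γ(C; S, S') = min {deg A : A ∈ Γ(C; S, S')}`. -/
def gammaMin (X : Curve Point) (C : Point →₀ ℤ) (S S' : Finset Point) : ℤ :=
  sInf (degr '' GammaSet X C S S')

/-- `Δ = {i : A_i ∈ Γ_{P_i} and A_i - C ∉ Γ_{P_i}}` for indices `1 ≤ i ≤ n`. -/
def Delta (X : Curve Point) (C : Point →₀ ℤ) (n : ℕ) (A : ℕ → Point →₀ ℤ)
    (P : ℕ → Point) : Set ℕ :=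
  {i | 1 ≤ i ∧ i ≤ n ∧ A i ∈ GammaP X (P i) ∧ A i - C ∉ GammaP X (P i)}

/-- `Δ' = {i : A_i ∉ Γ_{P_i} and A_i - C ∈ Γ_{P_i}}` for indices `1 ≤ i ≤ n`. -/
def Delta' (X : Curve Point) (C : Point →₀ ℤ) (n : ℕ) (A : ℕ → Point →₀ ℤ)
    (P : ℕ → Point) : Set ℕ :=
  {i | 1 ≤ i ∧ i ≤ n ∧ A i ∉ GammaP X (P i) ∧ A i - C ∈ GammaP X (P i)}

lemma degr_add' (A B : Point →₀ ℤ) : degr (A + B) = degr A + degr B :=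
  Finsupp.sum_add_index' (fun _ => rfl) (fun _ _ _ => rfl)

lemma degr_sub' (A B : Point →₀ ℤ) : degr (A - B) = degr A - degr B := by
  have := degr_add' (A - B) B
  rw [sub_add_cancel] at this
  linarith

lemma degr_eq_sum (F : Point →₀ ℤ) : degr F = ∑ p ∈ F.support, F p := rfl

lemma degr_nonneg' {F : Point →₀ ℤ} (h : 0 ≤ F) : 0 ≤ degr F := by
  rw [degr_eq_sum]
  exact Finset.sum_nonneg fun p _ => Finsupp.le_def.mp h p

lemma eff_eq_zero {F : Point →₀ ℤ} (hF : 0 ≤ F) (h : degr F = 0) : F = 0 := by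
  rw [degr_eq_sum] at h
  ext a
  by_cases ha : a ∈ F.support
  · exact (Finset.sum_eq_zero_iff_of_nonneg
      (fun p _ => Finsupp.le_def.mp hF p)).mp h a ha
  · simpa using Finsupp.notMem_support_iff.mp ha

/-- Induction principle for effective divisors: one may peel off single points. -/
lemma eff_induction (motive : (Point →₀ ℤ) → Prop)
    (h0 : motive 0)
    (hstep : ∀ (F : Point →₀ ℤ) (Q : Point), 0 ≤ F → 0 < F Q →
      motive (F - Finsupp.single Q 1) → motive F) :
    ∀ F : Point →₀ ℤ, 0 ≤ F → motive F := by
  intro F hF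
  obtain ⟨n, hn⟩ : ∃ n : ℕ, degr F = n :=
    ⟨(degr F).toNat, (Int.toNat_of_nonneg (degr_nonneg' hF)).symm⟩
  induction n generalizing F with
  | zero => rw [eff_eq_zero hF (by simpa using hn)]; exact h0
  | succ n ih =>
    have hne : F ≠ 0 := by
      intro h; rw [h] at hn; simp [degr] at hn; omega
    obtain ⟨Q, hQ⟩ : ∃ Q, F Q ≠ 0 := by
      by_contra h
      push_neg at h
      exact hne (by ext a; simpa using h a)
    have hQpos : 0 < F Q := lt_of_le_of_ne (Finsupp.le_def.mp hF Q) (Ne.symm hQ)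
    have hF' : 0 ≤ F - Finsupp.single Q 1 := by
      rw [Finsupp.le_def]
      intro a
      by_cases haQ : a = Q
      · subst haQ
        simp only [Finsupp.coe_zero, Pi.zero_apply, Finsupp.sub_apply,
          Finsupp.single_eq_same]
        omega
      · have h1 : (Finsupp.single Q 1 : Point →₀ ℤ) a = 0 :=
          Finsupp.single_eq_of_ne' (Ne.symm haQ)
        have h2 := Finsupp.le_def.mp hF a
        simp only [Finsupp.coe_zero, Pi.zero_apply, Finsupp.sub_apply, h1] at *
        omega
    have hdeg' : degr (F - Finsupp.single Q 1) = n := by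
      have h := degr_sub' F (Finsupp.single Q 1)
      have hs : degr (Finsupp.single Q 1) = 1 := by simp [degr]
      omega
    exact hstep F Q hF hQpos (ih _ hF' hdeg')

/-- Adding an effective divisor avoiding `P` preserves membership in `Γ_P`. -/
lemma gammaP_add_eff (X : Curve Point) (P : Point) :
    ∀ F : Point →₀ ℤ, 0 ≤ F → F P = 0 → ∀ A : Point →₀ ℤ,
    X.l A ≠ X.l (A - Finsupp.single P 1) →
    X.l (A + F) ≠ X.l (A + F - Finsupp.single P 1) := by
  refine eff_induction (motive := fun F => F P = 0 → ∀ A : Point →₀ ℤ,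
    X.l A ≠ X.l (A - Finsupp.single P 1) →
    X.l (A + F) ≠ X.l (A + F - Finsupp.single P 1)) ?_ ?_
  · intro _ A hA; simpa using hA
  · intro F Q hF0 hQpos ih hFP A hA
    have hQP : Q ≠ P := by
      intro h; rw [h, hFP] at hQpos; exact absurd hQpos (lt_irrefl 0)
    have hFP' : (F - (Finsupp.single Q 1 : Point →₀ ℤ)) P = 0 := by
      simp [Finsupp.sub_apply, Finsupp.single_apply, hQP, hFP]
    have h1 := ih hFP' A hA
    have h2 := X.point_nongap hQP
    have h3 := X.gamma_add P h1 h2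
    have heq : A + (F - Finsupp.single Q 1) + Finsupp.single Q 1 = A + F := by abel
    rwa [heq] at h3

/-- The drop `l(A) - l(A - D')` can only grow after adding an effective divisor
disjoint from `D'`. -/
lemma drop_mono (X : Curve Point) (F : Point →₀ ℤ) (hF : 0 ≤ F) :
    ∀ D' : Point →₀ ℤ, 0 ≤ D' → (∀ P, D' P ≠ 0 → F P = 0) →
    ∀ A, (X.l A : ℤ) - X.l (A - D') ≤ (X.l (A + F) : ℤ) - X.l (A + F - D') := by
  refine eff_induction (motive := fun D' => (∀ P, D' P ≠ 0 → F P = 0) →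
    ∀ A, (X.l A : ℤ) - X.l (A - D') ≤ (X.l (A + F) : ℤ) - X.l (A + F - D')) ?_ ?_
  · intro _ A; simp
  · intro D' Q hD'0 hQpos ih hdisj A
    have hFQ : F Q = 0 := hdisj Q (by omega)
    have hdisj' : ∀ P, (D' - (Finsupp.single Q 1 : Point →₀ ℤ)) P ≠ 0 → F P = 0 := by
      intro P hP
      by_cases hPQ : P = Q
      · exact hPQ ▸ hFQ
      · apply hdisj
        simpa [Finsupp.sub_apply, Finsupp.single_apply, Ne.symm hPQ] using hP
    have key := ih hdisj' (A - Finsupp.single Q 1)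
    have e1 : A - Finsupp.single Q 1 - (D' - Finsupp.single Q 1) = A - D' := by abel
    have e2 : A - Finsupp.single Q 1 + F = A + F - Finsupp.single Q 1 := by abel
    have e3 : A + F - Finsupp.single Q 1 - (D' - Finsupp.single Q 1)
        = A + F - D' := by abel
    rw [e1, e2, e3] at key
    -- bounds on single-point drops
    have m1 : X.l (A - Finsupp.single Q 1) ≤ X.l A := by
      have := X.l_mono (A - Finsupp.single Q 1) Q
      rwa [sub_add_cancel] at this
    have s1 : X.l A ≤ X.l (A - Finsupp.single Q 1) + 1 := by
      have := X.l_step (A - Finsupp.single Q 1) Q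
      rwa [sub_add_cancel] at this
    have m2 : X.l (A + F - Finsupp.single Q 1) ≤ X.l (A + F) := by
      have := X.l_mono (A + F - Finsupp.single Q 1) Q
      rwa [sub_add_cancel] at this
    by_cases hdropA : X.l A = X.l (A - Finsupp.single Q 1)
    · rw [hdropA]
      have : (X.l (A + F - Finsupp.single Q 1) : ℤ) ≤ X.l (A + F) := by
        exact_mod_cast m2
      linarith
    · have hdropB := gammaP_add_eff X Q F hF hFQ A hdropA
      have s2 : X.l (A + F) ≤ X.l (A + F - Finsupp.single Q 1) + 1 := by
        have := X.l_step (A + F - Finsupp.single Q 1) Q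
        rwa [sub_add_cancel] at this
      have hb : X.l (A + F - Finsupp.single Q 1) + 1 = X.l (A + F) := by omega
      have ha : X.l A = X.l (A - Finsupp.single Q 1) + 1 := by omega
      have ha' : (X.l A : ℤ) = X.l (A - Finsupp.single Q 1) + 1 := by exact_mod_cast ha
      have hb' : (X.l (A + F - Finsupp.single Q 1) : ℤ) + 1 = X.l (A + F) := by
        exact_mod_cast hb
      linarith

/-- (Key lemma for the ABZ bound) Let `G` be a divisor and let `η` be a nonzero rational
differential with divisor `(η) = G - D' + E` (so `K ~ G - D' + E`), where `D', E ≥ 0` and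
`E`, `D'` have disjoint supports.  If `G = A + B + Z` with `Z ≥ 0` and `Z` disjoint from
`D'`, then `deg D' ≥ (l(A) - l(A - D')) + (l(B) - l(B - D'))`. -/
theorem abz_lemma (X : Curve Point) (G D' E A B Z : Point →₀ ℤ)
    (hK : X.lin X.K (G - D' + E))
    (hD' : 0 ≤ D') (hE : 0 ≤ E) (hED' : Disjoint E.support D'.support)
    (hG : G = A + B + Z) (hZ : 0 ≤ Z) (hZD' : Disjoint Z.support D'.support) :
    ((X.l A : ℤ) - X.l (A - D')) + ((X.l B : ℤ) - X.l (B - D')) ≤ degr D' := by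
  -- the exact Riemann-Roch identity for A+E, B+Z
  have lin1 : X.lin (X.K - (A + E)) (B + Z - D') := by
    have h := X.lin_add (-(A + E)) hK
    have e1 : X.K + -(A + E) = X.K - (A + E) := by abel
    have e2 : G - D' + E + -(A + E) = B + Z - D' := by rw [hG]; abel
    rwa [e1, e2] at h
  have lin2 : X.lin (X.K - (A + E - D')) (B + Z) := by
    have h := X.lin_add (-(A + E - D')) hK
    have e1 : X.K + -(A + E - D') = X.K - (A + E - D') := by abel
    have e2 : G - D' + E + -(A + E - D') = B + Z := by rw [hG]; abel
    rwa [e1, e2] at h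
  have h1 := X.rr (A + E)
  have h2 := X.rr (A + E - D')
  rw [X.l_lin lin1] at h1
  rw [X.l_lin lin2] at h2
  have hdeg : degr (A + E - D') = degr (A + E) - degr D' := degr_sub' _ _
  have key : ((X.l (A + E) : ℤ) - X.l (A + E - D'))
      + ((X.l (B + Z) : ℤ) - X.l (B + Z - D')) = degr D' := by
    rw [hdeg] at h2; linarith
  have disjE : ∀ P, D' P ≠ 0 → E P = 0 := by
    intro P hP
    by_contra h
    exact absurd (Finsupp.mem_support_iff.mpr hP)
      (Finset.disjoint_left.mp hED' (Finsupp.mem_support_iff.mpr h))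
  have disjZ : ∀ P, D' P ≠ 0 → Z P = 0 := by
    intro P hP
    by_contra h
    exact absurd (Finsupp.mem_support_iff.mpr hP)
      (Finset.disjoint_left.mp hZD' (Finsupp.mem_support_iff.mpr h))
  have mA := drop_mono X E hE D' hD' disjE A
  have mB := drop_mono X Z hZ D' hD' disjZ B
  linarith
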